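/- Let X be a compact Hausdorff space, μ a regular Borel probability measure on X, and (f_i)_{i∈I} an increasing net of continuous functions f_i : X → [0,1] (i.e., i ≤ j implies f_i ≤ f_j pointwise) converging pointwise to a function f : X → [0,1]. Then f is Borel measurable (indeed lower semicontinuous) and ∫_X f dμ = sup_{i∈I} ∫_X f_i dμ = lim_{i∈I} ∫_X f_i dμ. -/

import Mathlib

open MeasureTheory Filter
open scoped ENNReal NNReal

private lemma step_aux {n : ℕ} (hn : 0 < n) {a : ℝ} (h0 : 0 ≤ a) (h1 : a ≤ 1) :
    ENNReal.ofReal a ≤ (n : ℝ≥0∞)⁻¹ +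
        ∑ k ∈ Finset.Icc 1 n, (if (k : ℝ) / n < a then ((n : ℝ≥0∞))⁻¹ else 0) ∧
      ∑ k ∈ Finset.Icc 1 n, (if (k : ℝ) / n < a then ((n : ℝ≥0∞))⁻¹ else 0)
        ≤ ENNReal.ofReal a := by
  classical
  have hnR : (0 : ℝ) < n := by exact_mod_cast hn
  set c := ⌈(n : ℝ) * a⌉₊ with hc
  have hfilter : (Finset.Icc 1 n).filter (fun k : ℕ => (k : ℝ) / n < a) = Finset.Ico 1 c := by
    ext k
    simp only [Finset.mem_filter, Finset.mem_Icc, Finset.mem_Ico]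
    constructor
    · rintro ⟨⟨h1k, hkn⟩, hlt⟩
      refine ⟨h1k, ?_⟩
      rw [hc, Nat.lt_ceil]
      rw [div_lt_iff₀ hnR] at hlt
      linarith
    · rintro ⟨h1k, hkc⟩
      have hka : (k : ℝ) < n * a := by rw [hc, Nat.lt_ceil] at hkc; linarith
      have hkn : (k : ℝ) < n := lt_of_lt_of_le hka (by nlinarith)
      refine ⟨⟨h1k, by exact_mod_cast hkn.le⟩, ?_⟩
      rw [div_lt_iff₀ hnR]
      linarith
  set m := ((Finset.Icc 1 n).filter fun k : ℕ => (k : ℝ) / n < a).card with hm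
  have hmcard : m = c - 1 := by rw [hm, hfilter, Nat.card_Ico]
  have hsum : (∑ k ∈ Finset.Icc 1 n, (if (k : ℝ) / n < a then ((n : ℝ≥0∞))⁻¹ else 0))
      = m * (n : ℝ≥0∞)⁻¹ := by
    rw [hm, ← Finset.sum_filter, Finset.sum_const, nsmul_eq_mul]
  have hmle : (m : ℝ) ≤ n * a := by
    rcases Nat.eq_zero_or_pos c with h0c | h0c
    · have hm0 : m = 0 := by omega
      rw [hm0]; push_cast; positivity
    · have hlt : (c : ℝ) < n * a + 1 := Nat.ceil_lt_add_one (by positivity)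
      have hcm : (m : ℝ) = (c : ℝ) - 1 := by
        rw [hmcard]
        have : 1 ≤ c := h0c
        push_cast [Nat.cast_sub this]
        ring
      rw [hcm]; linarith
  have hge : (n : ℝ) * a ≤ m + 1 := by
    have h2 : (n : ℝ) * a ≤ c := Nat.le_ceil _
    have h3 : c ≤ m + 1 := by omega
    have h4 : (c : ℝ) ≤ m + 1 := by exact_mod_cast h3
    linarith
  have hofr : ENNReal.ofReal ((m : ℝ) / n) = m * (n : ℝ≥0∞)⁻¹ := by
    rw [div_eq_mul_inv, ENNReal.ofReal_mul (Nat.cast_nonneg m),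
      ENNReal.ofReal_inv_of_pos hnR, ENNReal.ofReal_natCast, ENNReal.ofReal_natCast]
  have hof1 : ENNReal.ofReal (1 / (n : ℝ)) = (n : ℝ≥0∞)⁻¹ := by
    rw [one_div, ENNReal.ofReal_inv_of_pos hnR, ENNReal.ofReal_natCast]
  constructor
  · rw [hsum]
    calc ENNReal.ofReal a ≤ ENNReal.ofReal (1 / (n : ℝ) + (m : ℝ) / n) := by
          apply ENNReal.ofReal_le_ofReal
          rw [← add_div, le_div_iff₀ hnR]
          linarith
      _ = (n : ℝ≥0∞)⁻¹ + m * (n : ℝ≥0∞)⁻¹ := by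
          rw [ENNReal.ofReal_add (by positivity) (by positivity), hof1, hofr]
  · rw [hsum, ← hofr]
    apply ENNReal.ofReal_le_ofReal
    rw [div_le_iff₀ hnR]
    linarith

theorem stmt16 {X : Type*} [TopologicalSpace X] [CompactSpace X] [T2Space X]
    [MeasurableSpace X] [BorelSpace X]
    (μ : Measure X) [IsProbabilityMeasure μ] [μ.Regular]
    {I : Type*} [Preorder I] [IsDirected I (· ≤ ·)] [Nonempty I]
    (f : I → X → ℝ) (hcont : ∀ i, Continuous (f i))
    (hrange : ∀ i x, f i x ∈ Set.Icc (0 : ℝ) 1)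
    (hmono : ∀ i j, i ≤ j → ∀ x, f i x ≤ f j x)
    (g : X → ℝ)
    (hconv : ∀ x, Tendsto (fun i => f i x) atTop (nhds (g x))) :
    Measurable g ∧ LowerSemicontinuous g ∧
      (∫ x, g x ∂μ = ⨆ i, ∫ x, f i x ∂μ) ∧
      Tendsto (fun i => ∫ x, f i x ∂μ) atTop (nhds (∫ x, g x ∂μ)) := by
  classical
  have hle : ∀ i x, f i x ≤ g x := fun i x =>
    ge_of_tendsto (hconv x) (eventually_atTop.2 ⟨i, fun j hj => hmono i j hj x⟩)
  have hg0 : ∀ x, 0 ≤ g x := fun x =>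
    le_trans (hrange (Classical.arbitrary I) x).1 (hle _ x)
  have hg1 : ∀ x, g x ≤ 1 := fun x => le_of_tendsto' (hconv x) fun i => (hrange i x).2
  have hexists : ∀ {c : ℝ} {x : X}, c < g x → ∃ i, c < f i x := by
    intro c x hc
    by_contra h
    push_neg at h
    exact absurd (le_of_tendsto' (hconv x) h) (not_le.2 hc)
  have hUopen : ∀ (c : ℝ) i, IsOpen {x : X | c < f i x} := fun c i =>
    isOpen_lt continuous_const (hcont i)
  have hlsc : LowerSemicontinuous g := by
    intro x y hy
    obtain ⟨i, hi⟩ := hexists hy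
    filter_upwards [(hUopen y i).mem_nhds hi] with z hz
    exact lt_of_lt_of_le hz (hle i z)
  have hmeas : Measurable g := hlsc.measurable
  have hsup_meas : ∀ c : ℝ, μ {x | c < g x} = ⨆ i, μ {x | c < f i x} := by
    intro c
    have hUmono : Monotone fun i => {x : X | c < f i x} :=
      fun i j hij x hx => lt_of_lt_of_le hx (hmono i j hij x)
    have hUnion : {x | c < g x} = ⋃ i, {x : X | c < f i x} := by
      ext x
      simp only [Set.mem_setOf_eq, Set.mem_iUnion]
      exact ⟨fun h => hexists h, fun ⟨i, hi⟩ => lt_of_lt_of_le hi (hle i x)⟩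
    rw [hUnion]
    apply le_antisymm
    · rw [(isOpen_iUnion (hUopen c)).measure_eq_iSup_isCompact]
      refine iSup_le fun K => iSup_le fun hKU => iSup_le fun hK => ?_
      obtain ⟨i, hi⟩ := hK.elim_directed_cover _ (hUopen c) hKU hUmono.directed_le
      exact le_iSup_of_le i (measure_mono hi)
    · exact iSup_le fun i => measure_mono (Set.subset_iUnion (fun i => {x : X | c < f i x}) i)
  set G : ℝ≥0∞ := ∫⁻ x, ENNReal.ofReal (g x) ∂μ with hG
  set F : I → ℝ≥0∞ := fun i => ∫⁻ x, ENNReal.ofReal (f i x) ∂μ with hF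
  have hFle1 : ∀ i, F i ≤ 1 := by
    intro i
    calc F i ≤ ∫⁻ _, 1 ∂μ :=
          lintegral_mono fun x => ENNReal.ofReal_le_one.2 (hrange i x).2
      _ = 1 := by simp
  have hFmono : Monotone F := fun i j hij =>
    lintegral_mono fun x => ENNReal.ofReal_le_ofReal (hmono i j hij x)
  have hFleG : ∀ i, F i ≤ G := fun i =>
    lintegral_mono fun x => ENNReal.ofReal_le_ofReal (hle i x)
  have hkey : G ≤ ⨆ i, F i := by
    refine ENNReal.le_of_forall_pos_le_add fun ε hε hlt => ?_
    obtain ⟨n, hn⟩ := ENNReal.exists_inv_nat_lt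
      (show ((ε : ℝ≥0∞)) ≠ 0 by exact_mod_cast hε.ne')
    have hn0 : 0 < n := by
      rcases Nat.eq_zero_or_pos n with rfl | h
      · rw [Nat.cast_zero, ENNReal.inv_zero] at hn
        exact absurd hn not_top_lt
      · exact h
    have hmeasA : ∀ k : ℕ, MeasurableSet {x : X | (k : ℝ) / n < g x} :=
      fun k => measurableSet_lt measurable_const hmeas
    have hstep_g : G ≤ (n : ℝ≥0∞)⁻¹ +
        ∑ k ∈ Finset.Icc 1 n, (n : ℝ≥0∞)⁻¹ * μ {x | (k : ℝ) / n < g x} := by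
      have h1 : G ≤ ∫⁻ x, ((n : ℝ≥0∞)⁻¹ + ∑ k ∈ Finset.Icc 1 n,
          Set.indicator {y : X | (k : ℝ) / n < g y} (fun _ => (n : ℝ≥0∞)⁻¹) x) ∂μ := by
        apply lintegral_mono
        intro x
        have := (step_aux hn0 (hg0 x) (hg1 x)).1
        simpa [Set.indicator_apply] using this
      refine h1.trans ?_
      rw [lintegral_add_left measurable_const, lintegral_const, measure_univ, mul_one,
        lintegral_finset_sum _ (fun k _ => measurable_const.indicator (hmeasA k))]
      exact add_le_add_right (le_of_eq (Finset.sum_congr rfl fun k _ =>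
        lintegral_indicator_const (hmeasA k) _)) _
    have hstep_f : ∀ i,
        ∑ k ∈ Finset.Icc 1 n, (n : ℝ≥0∞)⁻¹ * μ {x | (k : ℝ) / n < f i x} ≤ F i := by
      intro i
      have hmeasB : ∀ k : ℕ, MeasurableSet {x : X | (k : ℝ) / n < f i x} :=
        fun k => (hUopen _ i).measurableSet
      calc ∑ k ∈ Finset.Icc 1 n, (n : ℝ≥0∞)⁻¹ * μ {x | (k : ℝ) / n < f i x}
          = ∫⁻ x, ∑ k ∈ Finset.Icc 1 n,
              Set.indicator {y : X | (k : ℝ) / n < f i y} (fun _ => (n : ℝ≥0∞)⁻¹) x ∂μ := by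
            rw [lintegral_finset_sum _ (fun k _ => measurable_const.indicator (hmeasB k))]
            exact (Finset.sum_congr rfl fun k _ =>
              (lintegral_indicator_const (hmeasB k) _).symm)
        _ ≤ F i := lintegral_mono fun x => by
            simpa [Set.indicator_apply] using
              (step_aux hn0 (hrange i x).1 (hrange i x).2).2
    have hswap : ∑ k ∈ Finset.Icc 1 n, (n : ℝ≥0∞)⁻¹ * μ {x | (k : ℝ) / n < g x}
        = ⨆ i, ∑ k ∈ Finset.Icc 1 n, (n : ℝ≥0∞)⁻¹ * μ {x | (k : ℝ) / n < f i x} := by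
      calc ∑ k ∈ Finset.Icc 1 n, (n : ℝ≥0∞)⁻¹ * μ {x | (k : ℝ) / n < g x}
          = ∑ k ∈ Finset.Icc 1 n, ⨆ i, (n : ℝ≥0∞)⁻¹ * μ {x | (k : ℝ) / n < f i x} := by
            refine Finset.sum_congr rfl fun k _ => ?_
            rw [hsup_meas, ENNReal.mul_iSup]
        _ = ⨆ i, ∑ k ∈ Finset.Icc 1 n, (n : ℝ≥0∞)⁻¹ * μ {x | (k : ℝ) / n < f i x} :=
            ENNReal.finsetSum_iSup_of_monotone fun k _ _ hij =>
              mul_le_mul_right (measure_mono fun x hx =>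
                lt_of_lt_of_le hx (hmono _ _ hij x)) _
    calc G ≤ (n : ℝ≥0∞)⁻¹ +
            ∑ k ∈ Finset.Icc 1 n, (n : ℝ≥0∞)⁻¹ * μ {x | (k : ℝ) / n < g x} := hstep_g
      _ = (n : ℝ≥0∞)⁻¹ + ⨆ i, ∑ k ∈ Finset.Icc 1 n,
            (n : ℝ≥0∞)⁻¹ * μ {x | (k : ℝ) / n < f i x} := by rw [hswap]
      _ ≤ (n : ℝ≥0∞)⁻¹ + ⨆ i, F i := add_le_add_right (iSup_mono hstep_f) _
      _ ≤ (ε : ℝ≥0∞) + ⨆ i, F i := add_le_add_left hn.le _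
      _ = (⨆ i, F i) + ε := add_comm _ _
  have hGeq : G = ⨆ i, F i := le_antisymm hkey (iSup_le hFleG)
  have hint_g : ∫ x, g x ∂μ = G.toReal :=
    integral_eq_lintegral_of_nonneg_ae (Filter.Eventually.of_forall hg0)
      hmeas.aestronglyMeasurable
  have hint_f : ∀ i, ∫ x, f i x ∂μ = (F i).toReal := fun i =>
    integral_eq_lintegral_of_nonneg_ae (Filter.Eventually.of_forall fun x => (hrange i x).1)
      (hcont i).aestronglyMeasurable
  have hFne : ∀ i, F i ≠ ⊤ := fun i => ((hFle1 i).trans_lt ENNReal.one_lt_top).ne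
  have hsup_int : ∫ x, g x ∂μ = ⨆ i, ∫ x, f i x ∂μ := by
    rw [hint_g, hGeq, ENNReal.toReal_iSup hFne]
    exact iSup_congr fun i => (hint_f i).symm
  refine ⟨hmeas, hlsc, hsup_int, ?_⟩
  rw [hsup_int]
  apply tendsto_atTop_ciSup
  · intro i j hij
    show ∫ x, f i x ∂μ ≤ ∫ x, f j x ∂μ
    rw [hint_f i, hint_f j]
    exact ENNReal.toReal_mono (hFne j) (hFmono hij)
  · refine ⟨1, ?_⟩
    rintro r ⟨i, rfl⟩
    show ∫ x, f i x ∂μ ≤ 1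
    rw [hint_f i]
    have := ENNReal.toReal_mono (by simp) (hFle1 i)
    simpa using this
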